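/- Let E_1, E_2 be Banach lattices such that, for i = 1, 2, every norm-bounded disjoint sequence of positive elements of E_i is weakly null (equivalently, the norms of E_1* and E_2* are order continuous), and let F be a Banach lattice such that F* has the dual positive Schur property. Let A : E_1 × E_2 → F be a positive almost Dunford–Pettis continuous bilinear operator. Then the Aron–Berner extensions of A, namely A*** : E_1** × E_2** → F** given by A***(x**, y**)(y*) = x**( z ↦ y**( w ↦ y*(A(z,w)))) and AB(A) : E_1** × E_2** → F** given by AB(A)(x**, y**)(y*) = y**( w ↦ x**( z ↦ y*(A(z,w)))), are weakly positively limited: ‖A***(x_n**, y_n**)‖ → 0 and ‖AB(A)(x_n**, y_n**)‖ → 0 whenever (x_n**), (y_n**) are sequences of positive elements of E_1**, E_2** respectively and one of them is weak*-null while the other is norm bounded. -/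

import Mathlib

noncomputable section

open Filter Topology NormedSpace

/-- A sequence in a Banach lattice is disjoint if `|x n| ⊓ |x k| = 0` for `n ≠ k`. -/
def DisjointSeq {E : Type*} [NormedAddCommGroup E] [Lattice E] [IsOrderedAddMonoid E] [HasSolidNorm E] (x : ℕ → E) : Prop :=
  ∀ n k, n ≠ k → |x n| ⊓ |x k| = 0

/-- A sequence is weakly null if `f (x n) → 0` for every continuous linear functional `f`. -/
def WeaklyNull {E : Type*} [NormedAddCommGroup E] [NormedSpace ℝ E] (x : ℕ → E) : Prop :=
  ∀ f : E →L[ℝ] ℝ, Tendsto (fun n => f (x n)) atTop (𝓝 0)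

/-- A continuous linear functional on a Banach lattice is positive if it takes nonnegative
values at positive elements. -/
def PosFunctional {E : Type*} [NormedAddCommGroup E] [Lattice E] [IsOrderedAddMonoid E] [HasSolidNorm E] [NormedSpace ℝ E]
    (f : StrongDual ℝ E) : Prop :=
  ∀ x : E, 0 ≤ x → 0 ≤ f x

/-- An element of the bidual of a Banach lattice is positive if it takes nonnegative values
at positive functionals. -/
def PosBidual {E : Type*} [NormedAddCommGroup E] [Lattice E] [IsOrderedAddMonoid E] [HasSolidNorm E] [NormedSpace ℝ E]
    (Φ : StrongDual ℝ (StrongDual ℝ E)) : Prop :=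
  ∀ f : StrongDual ℝ E, PosFunctional f → 0 ≤ Φ f

/-- A sequence in the bidual is weak*-null if it converges to `0` pointwise on the dual. -/
def WeakStarNull {E : Type*} [NormedAddCommGroup E] [NormedSpace ℝ E]
    (Φ : ℕ → StrongDual ℝ (StrongDual ℝ E)) : Prop :=
  ∀ f : StrongDual ℝ E, Tendsto (fun n => Φ n f) atTop (𝓝 0)

/-- The Aron-Berner extension of a continuous bilinear operator `A : E₁ × E₂ → F` (in
curried form), given by `arensBil A x** y** (y*) = x** (z ↦ y** (w ↦ y* (A z w)))`. -/
def arensBil {E₁ E₂ F : Type*} [NormedAddCommGroup E₁] [NormedSpace ℝ E₁]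
    [NormedAddCommGroup E₂] [NormedSpace ℝ E₂] [NormedAddCommGroup F] [NormedSpace ℝ F]
    (A : E₁ →L[ℝ] E₂ →L[ℝ] F) (xbb : StrongDual ℝ (StrongDual ℝ E₁)) (ybb : StrongDual ℝ (StrongDual ℝ E₂)) :
    StrongDual ℝ (StrongDual ℝ F) :=
  xbb.comp ((ContinuousLinearMap.compL ℝ E₁ (E₂ →L[ℝ] ℝ) ℝ ybb).comp
    (((ContinuousLinearMap.compL ℝ E₁ (E₂ →L[ℝ] F) (E₂ →L[ℝ] ℝ)).flip A).comp
      (ContinuousLinearMap.compL ℝ E₂ F ℝ)))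

/-- The defining formula of `arensBil`:  `y* ∘ A : E₁ →L E₂* ` is `z ↦ y* ∘ (A z)`, and
`arensBil A x** y** (y*) = x** (y** ∘ (y* ∘ A)) = x** (z ↦ y** (w ↦ y* (A z w)))`. -/
theorem arensBil_apply {E₁ E₂ F : Type*} [NormedAddCommGroup E₁] [NormedSpace ℝ E₁]
    [NormedAddCommGroup E₂] [NormedSpace ℝ E₂] [NormedAddCommGroup F] [NormedSpace ℝ F]
    (A : E₁ →L[ℝ] E₂ →L[ℝ] F) (xbb : StrongDual ℝ (StrongDual ℝ E₁)) (ybb : StrongDual ℝ (StrongDual ℝ E₂))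
    (g : StrongDual ℝ F) :
    arensBil A xbb ybb g =
      xbb (ybb.comp ((ContinuousLinearMap.compL ℝ E₂ F ℝ g).comp A)) := rfl


section AuxLat
set_option linter.unusedSectionVars false
variable {E : Type*} [NormedAddCommGroup E] [Lattice E] [IsOrderedAddMonoid E] [HasSolidNorm E] [NormedSpace ℝ E]

lemma lat_inf_add (a b c : E) (ha : 0 ≤ a) (hb : 0 ≤ b) (hc : 0 ≤ c) :
    a ⊓ (b + c) ≤ a ⊓ b + a ⊓ c := by
  have h1 : a ⊓ b + a ⊓ c = ((a ⊓ b) + a) ⊓ ((a ⊓ b) + c) := add_inf _ _ _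
  have h2 : (a ⊓ b) + a = (a + a) ⊓ (b + a) := by
    rw [add_comm, add_inf, add_comm a a, add_comm a b]
  have h3 : (a ⊓ b) + c = (a + c) ⊓ (b + c) := by
    rw [add_comm, add_inf, add_comm c a, add_comm c b]
  rw [h1, h2, h3]
  refine le_inf (le_inf ?_ ?_) (le_inf ?_ ?_)
  · exact le_trans inf_le_left (le_add_of_nonneg_right ha)
  · exact le_trans inf_le_left (le_add_of_nonneg_left hb)
  · exact le_trans inf_le_left (le_add_of_nonneg_right hc)
  · exact inf_le_right

lemma dis_nsmul (a b : E) (ha : 0 ≤ a) (hb : 0 ≤ b) (h : a ⊓ b = 0) (n : ℕ) :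
    a ⊓ (n • b) = 0 := by
  induction n with
  | zero => simpa using le_antisymm inf_le_right (le_inf ha le_rfl)
  | succ n ih =>
    have hnb : 0 ≤ n • b := nsmul_nonneg hb n
    have : a ⊓ ((n+1) • b) ≤ a ⊓ (n • b) + a ⊓ b := by
      rw [succ_nsmul]
      exact lat_inf_add a (n • b) b ha hnb hb
    rw [ih, h, add_zero] at this
    exact le_antisymm this (le_inf ha (nsmul_nonneg hb (n+1)))

lemma nonneg_of_nsmul_nonneg (y : E) (n : ℕ) (hn : 0 < n) (h : 0 ≤ n • y) : 0 ≤ y := by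
  have h1 : y⁻ ≤ n • y⁻ := by
    have : (n - 1) • y⁻ + 1 • y⁻ = n • y⁻ := by
      rw [← add_nsmul, Nat.sub_add_cancel hn]
    have h0 : 0 ≤ (n - 1) • y⁻ := nsmul_nonneg (negPart_nonneg y) _
    calc y⁻ = 1 • y⁻ := (one_nsmul _).symm
    _ ≤ (n - 1) • y⁻ + 1 • y⁻ := le_add_of_nonneg_left h0
    _ = n • y⁻ := this
  have h2 : n • y⁻ ≤ n • y⁺ := by
    have : n • y = n • y⁺ - n • y⁻ := by
      rw [← nsmul_sub, posPart_sub_negPart]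
    rw [this] at h
    exact sub_nonneg.mp h
  have h3 : y⁻ ⊓ (n • y⁺) = y⁻ := inf_eq_left.mpr (le_trans h1 h2)
  have h4 : y⁻ ⊓ (n • y⁺) = 0 := by
    apply dis_nsmul _ _ (negPart_nonneg y) (posPart_nonneg y)
    rw [inf_comm]; exact posPart_inf_negPart_eq_zero y
  rw [h3] at h4
  exact negPart_eq_zero.mp h4

lemma rat_smul_nonneg (q : ℚ) (hq : 0 ≤ q) (x : E) (hx : 0 ≤ x) : 0 ≤ (q : ℝ) • x := by
  have hden : (0:ℕ) < q.den := q.pos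
  have key : (q.den : ℝ) • ((q : ℝ) • x) = (q.num.toNat : ℝ) • x := by
    rw [smul_smul]
    congr 1
    have : ((q.num.toNat : ℤ) : ℝ) = (q.num : ℝ) := by
      rw [Int.toNat_of_nonneg (Rat.num_nonneg.mpr hq)]
    rw [show ((q.num.toNat : ℕ) : ℝ) = ((q.num.toNat : ℤ) : ℝ) by push_cast; ring, this]
    rw [Rat.cast_def]
    field_simp
  have h1 : 0 ≤ (q.num.toNat : ℝ) • x := by
    rw [Nat.cast_smul_eq_nsmul]; exact nsmul_nonneg hx _
  rw [← key] at h1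
  rw [Nat.cast_smul_eq_nsmul] at h1
  exact nonneg_of_nsmul_nonneg _ _ hden h1

lemma real_smul_nonneg (c : ℝ) (hc : 0 ≤ c) (x : E) (hx : 0 ≤ x) : 0 ≤ c • x := by
  have : ∀ k : ℕ, ∃ q : ℚ, c < (q:ℝ) ∧ (q:ℝ) < c + 1/(k+1) := by
    intro k
    have hpos : (0:ℝ) < 1/((k:ℝ)+1) := by positivity
    exact_mod_cast exists_rat_btwn (by linarith : c < c + 1/((k:ℝ)+1))
  choose q hq1 hq2 using this
  have hq0 : ∀ k, (0:ℚ) ≤ q k := fun k => by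
    have := lt_of_le_of_lt hc (hq1 k); exact_mod_cast this.le
  have hlim : Tendsto (fun k => ((q k : ℝ))) atTop (𝓝 c) := by
    have h1 : Tendsto (fun k : ℕ => c + 1/((k:ℝ)+1)) atTop (𝓝 (c + 0)) := by
      exact tendsto_const_nhds.add (tendsto_one_div_add_atTop_nhds_zero_nat)
    rw [add_zero] at h1
    exact tendsto_of_tendsto_of_tendsto_of_le_of_le tendsto_const_nhds h1
      (fun k => (hq1 k).le) (fun k => (hq2 k).le)
  have hsl : Tendsto (fun k => ((q k : ℝ)) • x) atTop (𝓝 (c • x)) := hlim.smul_const x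
  exact ge_of_tendsto' hsl (fun k => rat_smul_nonneg (q k) (hq0 k) x hx)

lemma smul_mono_vec (c : ℝ) (hc : 0 ≤ c) {x y : E} (h : x ≤ y) : c • x ≤ c • y := by
  have := real_smul_nonneg c hc (y - x) (sub_nonneg.mpr h)
  rw [smul_sub] at this
  exact sub_nonneg.mp this

lemma smul_mono_coeff {c d : ℝ} (h : c ≤ d) {x : E} (hx : 0 ≤ x) : c • x ≤ d • x := by
  have := real_smul_nonneg (d - c) (by linarith) x hx
  rw [sub_smul] at this
  exact sub_nonneg.mp this


lemma norm_le_of_between {a b : E} (h0 : 0 ≤ a) (h : a ≤ b) : ‖a‖ ≤ ‖b‖ :=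
  HasSolidNorm.solid (by rwa [abs_of_nonneg h0, abs_of_nonneg (le_trans h0 h)])

lemma pos_apply_abs (g : E →L[ℝ] ℝ) (hg : ∀ x : E, 0 ≤ x → 0 ≤ g x) (x : E) :
    |g x| ≤ g |x| := by
  rw [abs_le]
  constructor
  · have := hg (|x| + x) (by rw [← sub_neg_eq_add]; exact sub_nonneg.mpr (neg_le_abs x))
    rw [map_add] at this; linarith
  · have := hg (|x| - x) (sub_nonneg.mpr (le_abs_self x))
    rw [map_sub] at this; linarith

/-- The Aliprantis–Burkinshaw style exact disjointification. -/
lemma disjointify (v : ℕ → E) [CompleteSpace E] (hv : ∀ k, 0 ≤ v k) (hb : ∀ k, ‖v k‖ ≤ 1) :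
    ∃ D : ℕ → E, (∀ k, 0 ≤ D k) ∧ (∀ k, D k ≤ v k) ∧ DisjointSeq D ∧
      (∀ (g : E →L[ℝ] ℝ), (∀ x : E, 0 ≤ x → 0 ≤ g x) → ∀ k,
        g (v k) - (4:ℝ)^k * (∑ i ∈ Finset.range k, g (v i)) - (1/2:ℝ)^k * (2 * ‖g‖)
          ≤ g (D k)) := by
  have hsummable : Summable (fun i => (1/2:ℝ)^i • v i) := by
    apply Summable.of_norm
    apply Summable.of_nonneg_of_le (fun i => norm_nonneg _) _ summable_geometric_two
    intro i
    rw [norm_smul, Real.norm_eq_abs, abs_of_nonneg (by positivity)]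
    calc (1/2:ℝ)^i * ‖v i‖ ≤ (1/2:ℝ)^i * 1 := by
          apply mul_le_mul_of_nonneg_left (hb i) (by positivity)
      _ = (1/2:ℝ)^i := mul_one _
  set u : E := ∑' i, (1/2:ℝ)^i • v i with hu_def
  have hu : HasSum (fun i => (1/2:ℝ)^i • v i) u := hsummable.hasSum
  have hu_ge : ∀ k, (1/2:ℝ)^k • v k ≤ u := fun k =>
    le_hasSum hu k (fun j _ => real_smul_nonneg _ (by positivity) _ (hv j))
  have hu_pos : 0 ≤ u :=
    tsum_nonneg (fun i => real_smul_nonneg _ (by positivity) _ (hv i))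
  have hu_norm : ‖u‖ ≤ 2 := by
    refine le_trans (norm_tsum_le_tsum_norm ?_) ?_
    · apply Summable.of_nonneg_of_le (fun i => norm_nonneg _) _ summable_geometric_two
      intro i
      rw [norm_smul, Real.norm_eq_abs, abs_of_nonneg (by positivity)]
      calc (1/2:ℝ)^i * ‖v i‖ ≤ (1/2:ℝ)^i * 1 := by
            apply mul_le_mul_of_nonneg_left (hb i) (by positivity)
        _ = (1/2:ℝ)^i := mul_one _
    · calc ∑' i, ‖(1/2:ℝ)^i • v i‖ ≤ ∑' i, (1/2:ℝ)^i := by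
            apply Summable.tsum_le_tsum _ _ summable_geometric_two
            · intro i
              rw [norm_smul, Real.norm_eq_abs, abs_of_nonneg (by positivity)]
              calc (1/2:ℝ)^i * ‖v i‖ ≤ (1/2:ℝ)^i * 1 := by
                    apply mul_le_mul_of_nonneg_left (hb i) (by positivity)
                _ = (1/2:ℝ)^i := mul_one _
            · apply Summable.of_nonneg_of_le (fun i => norm_nonneg _) _ summable_geometric_two
              intro i
              rw [norm_smul, Real.norm_eq_abs, abs_of_nonneg (by positivity)]
              calc (1/2:ℝ)^i * ‖v i‖ ≤ (1/2:ℝ)^i * 1 := by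
                    apply mul_le_mul_of_nonneg_left (hb i) (by positivity)
                _ = (1/2:ℝ)^i := mul_one _
        _ = 2 := tsum_geometric_two
  refine ⟨fun k => (v k - (4:ℝ)^k • (∑ i ∈ Finset.range k, v i) - (1/2:ℝ)^k • u)⁺,
    fun k => posPart_nonneg _, ?_, ?_, ?_⟩
  · -- D k ≤ v k
    intro k
    have h1 : v k - (4:ℝ)^k • (∑ i ∈ Finset.range k, v i) - (1/2:ℝ)^k • u ≤ v k := by
      have s1 : 0 ≤ (4:ℝ)^k • (∑ i ∈ Finset.range k, v i) :=
        real_smul_nonneg _ (by positivity) _ (Finset.sum_nonneg (fun i _ => hv i))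
      have s2 : 0 ≤ (1/2:ℝ)^k • u := real_smul_nonneg _ (by positivity) _ hu_pos
      calc v k - (4:ℝ)^k • (∑ i ∈ Finset.range k, v i) - (1/2:ℝ)^k • u
          ≤ v k - (4:ℝ)^k • (∑ i ∈ Finset.range k, v i) := sub_le_self _ s2
        _ ≤ v k := sub_le_self _ s1
    calc (v k - (4:ℝ)^k • (∑ i ∈ Finset.range k, v i) - (1/2:ℝ)^k • u)⁺ ≤ (v k)⁺ :=
          posPart_mono h1
      _ = v k := posPart_eq_self.mpr (hv k)
  · -- disjointness
    have key : ∀ i k : ℕ, i < k →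
        ((v i - (4:ℝ)^i • (∑ l ∈ Finset.range i, v l) - (1/2:ℝ)^i • u)⁺) ⊓
        ((v k - (4:ℝ)^k • (∑ l ∈ Finset.range k, v l) - (1/2:ℝ)^k • u)⁺) = 0 := by
      intro i k hik
      set s : E := v i - (1/2:ℝ)^(i+k) • v k with hs_def
      set t : E := v k - (4:ℝ)^k • v i with ht_def
      have hDi : (v i - (4:ℝ)^i • (∑ l ∈ Finset.range i, v l) - (1/2:ℝ)^i • u)⁺ ≤ s⁺ := by
        apply posPart_mono
        have h1 : (1/2:ℝ)^(i+k) • v k ≤ (1/2:ℝ)^i • u := by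
          have := smul_mono_vec ((1/2:ℝ)^i) (by positivity) (hu_ge k)
          rwa [smul_smul, ← pow_add] at this
        have h2 : 0 ≤ (4:ℝ)^i • (∑ l ∈ Finset.range i, v l) :=
          real_smul_nonneg _ (by positivity) _ (Finset.sum_nonneg (fun l _ => hv l))
        rw [hs_def]
        have : v i - (4:ℝ)^i • (∑ l ∈ Finset.range i, v l) - (1/2:ℝ)^i • u
            ≤ v i - (1/2:ℝ)^i • u := by
          rw [sub_right_comm]
          exact sub_le_self _ h2
        refine le_trans this ?_
        exact sub_le_sub_left h1 _
      have hDk : (v k - (4:ℝ)^k • (∑ l ∈ Finset.range k, v l) - (1/2:ℝ)^k • u)⁺ ≤ t⁺ := by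
        apply posPart_mono
        have h1 : (4:ℝ)^k • v i ≤ (4:ℝ)^k • (∑ l ∈ Finset.range k, v l) := by
          apply smul_mono_vec _ (by positivity)
          exact Finset.single_le_sum (fun l _ => hv l) (Finset.mem_range.mpr hik)
        have h2 : 0 ≤ (1/2:ℝ)^k • u := real_smul_nonneg _ (by positivity) _ hu_pos
        rw [ht_def]
        calc v k - (4:ℝ)^k • (∑ l ∈ Finset.range k, v l) - (1/2:ℝ)^k • u
            ≤ v k - (4:ℝ)^k • (∑ l ∈ Finset.range k, v l) := sub_le_self _ h2
          _ ≤ v k - (4:ℝ)^k • v i := sub_le_sub_left h1 _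
      have ht_le : t ≤ (2:ℝ)^(i+k) • s⁻ := by
        have h1 : t ≤ (2:ℝ)^(i+k) • (-s) := by
          rw [hs_def, ht_def, neg_sub, smul_sub, smul_smul]
          have hcoef : ((2:ℝ)^(i+k)) * ((1/2:ℝ)^(i+k)) = 1 := by
            rw [← mul_pow]; norm_num
          rw [hcoef, one_smul]
          apply sub_le_sub_left
          apply smul_mono_coeff _ (hv i)
          calc (2:ℝ)^(i+k) ≤ (2:ℝ)^(k+k) := by
                apply pow_le_pow_right₀ (by norm_num)
                omega
            _ = (4:ℝ)^k := by rw [← two_mul, pow_mul]; norm_num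
        refine le_trans h1 ?_
        apply smul_mono_vec _ (by positivity)
        exact neg_le_negPart s
      have ht_pos : (0:E) ≤ (2:ℝ)^(i+k) • s⁻ :=
        real_smul_nonneg _ (by positivity) _ (negPart_nonneg s)
      have hts : t⁺ ≤ (2:ℝ)^(i+k) • s⁻ := by
        rw [← posPart_eq_self.mpr ht_pos]
        exact posPart_mono ht_le
      have hzero : s⁺ ⊓ ((2:ℝ)^(i+k) • s⁻) = 0 := by
        have hcast : ((2:ℝ)^(i+k)) • s⁻ = ((2^(i+k) : ℕ) : ℝ) • s⁻ := by push_cast; ring_nf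
        rw [hcast, Nat.cast_smul_eq_nsmul]
        exact dis_nsmul _ _ (posPart_nonneg s) (negPart_nonneg s)
          (posPart_inf_negPart_eq_zero s) _
      apply le_antisymm
      · calc _ ≤ s⁺ ⊓ t⁺ := inf_le_inf hDi hDk
          _ ≤ s⁺ ⊓ ((2:ℝ)^(i+k) • s⁻) := inf_le_inf_left _ hts
          _ = 0 := hzero
      · exact le_inf (posPart_nonneg _) (posPart_nonneg _)
    intro n k hnk
    rcases lt_or_gt_of_ne hnk with h | h
    · rw [abs_of_nonneg (posPart_nonneg _), abs_of_nonneg (posPart_nonneg _)]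
      exact key n k h
    · rw [abs_of_nonneg (posPart_nonneg _), abs_of_nonneg (posPart_nonneg _), inf_comm]
      exact key k n h
  · -- lower bound for positive functionals
    intro g hg k
    have hle : v k - (4:ℝ)^k • (∑ i ∈ Finset.range k, v i) - (1/2:ℝ)^k • u
        ≤ (v k - (4:ℝ)^k • (∑ i ∈ Finset.range k, v i) - (1/2:ℝ)^k • u)⁺ := le_posPart _
    have := hg _ (sub_nonneg.mpr hle)
    rw [map_sub] at this
    have hgx : g (v k - (4:ℝ)^k • (∑ i ∈ Finset.range k, v i) - (1/2:ℝ)^k • u)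
        ≤ g ((v k - (4:ℝ)^k • (∑ i ∈ Finset.range k, v i) - (1/2:ℝ)^k • u)⁺) := by linarith
    refine le_trans ?_ hgx
    rw [map_sub, map_sub, map_smul, map_smul, map_sum]
    have hgu : g u ≤ 2 * ‖g‖ := by
      calc g u ≤ |g u| := le_abs_self _
        _ = ‖g u‖ := rfl
        _ ≤ ‖g‖ * ‖u‖ := g.le_opNorm u
        _ ≤ ‖g‖ * 2 := by
            apply mul_le_mul_of_nonneg_left hu_norm (norm_nonneg g)
        _ = 2 * ‖g‖ := by ring
    have : (1/2:ℝ)^k * g u ≤ (1/2:ℝ)^k * (2 * ‖g‖) :=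
      mul_le_mul_of_nonneg_left hgu (by positivity)
    simp only [smul_eq_mul]
    linarith

end AuxLat

section RK
variable {E : Type*} [NormedAddCommGroup E] [Lattice E] [IsOrderedAddMonoid E] [HasSolidNorm E] [NormedSpace ℝ E]

lemma smul_sup_ge (c : ℝ) (hc : 0 ≤ c) (x y : E) : (c•x) ⊔ (c•y) ≤ c•(x ⊔ y) :=
  sup_le (smul_mono_vec c hc le_sup_left) (smul_mono_vec c hc le_sup_right)

lemma smul_sup' (c : ℝ) (hc : 0 < c) (x y : E) : c•(x ⊔ y) = (c•x) ⊔ (c•y) := by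
  refine le_antisymm ?_ (smul_sup_ge c hc.le x y)
  have h := smul_sup_ge c⁻¹ (by positivity) (c•x) (c•y)
  rw [smul_smul, smul_smul, inv_mul_cancel₀ hc.ne', one_smul, one_smul] at h
  have := smul_mono_vec c hc.le h
  rwa [smul_smul, mul_inv_cancel₀ hc.ne', one_smul] at this

lemma smul_posPart' (c : ℝ) (hc : 0 ≤ c) (x : E) : (c•x)⁺ = c•x⁺ := by
  rcases eq_or_lt_of_le hc with h | h
  · simp [← h]
  · rw [posPart_def, posPart_def, smul_sup' c h, smul_zero]

lemma posPart_le_abs' (x : E) : x⁺ ≤ |x| := by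
  rw [posPart_def]
  exact sup_le (le_abs_self x) (abs_nonneg x)

lemma negPart_le_abs' (x : E) : x⁻ ≤ |x| := by
  rw [negPart_def]
  exact sup_le (neg_le_abs x) (abs_nonneg x)

lemma smul_negPart' (c : ℝ) (hc : 0 ≤ c) (x : E) : (c•x)⁻ = c•x⁻ := by
  rw [← posPart_neg, ← smul_neg, smul_posPart' c hc, posPart_neg]

/-- Riesz-Kantorovich sup over the order interval `[0, z]`. -/
noncomputable def pQ (h : E →L[ℝ] ℝ) (z : E) : ℝ := sSup (h '' {w | 0 ≤ w ∧ w ≤ z})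

lemma pQ_bddAbove (h : E →L[ℝ] ℝ) (z : E) : BddAbove (h '' {w | 0 ≤ w ∧ w ≤ z}) := by
  refine ⟨‖h‖ * ‖z‖, ?_⟩
  rintro r ⟨w, ⟨hw0, hwz⟩, rfl⟩
  calc h w ≤ |h w| := le_abs_self _
    _ = ‖h w‖ := rfl
    _ ≤ ‖h‖ * ‖w‖ := h.le_opNorm w
    _ ≤ ‖h‖ * ‖z‖ := mul_le_mul_of_nonneg_left (norm_le_of_between hw0 hwz) (norm_nonneg h)

lemma le_pQ (h : E →L[ℝ] ℝ) {z : E} (w : E) (hw0 : 0 ≤ w) (hwz : w ≤ z) : h w ≤ pQ h z :=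
  le_csSup (pQ_bddAbove h z) ⟨w, ⟨hw0, hwz⟩, rfl⟩

lemma pQ_le (h : E →L[ℝ] ℝ) {z : E} (hz : 0 ≤ z) (s : ℝ)
    (hs : ∀ w : E, 0 ≤ w → w ≤ z → h w ≤ s) : pQ h z ≤ s := by
  refine csSup_le ⟨h 0, ⟨0, ⟨le_rfl, hz⟩, rfl⟩⟩ ?_
  rintro r ⟨w, ⟨hw0, hwz⟩, rfl⟩
  exact hs w hw0 hwz

lemma pQ_nonneg (h : E →L[ℝ] ℝ) {z : E} (hz : 0 ≤ z) : 0 ≤ pQ h z := by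
  have := le_pQ h 0 le_rfl hz
  simpa using this

lemma pQ_zero (h : E →L[ℝ] ℝ) : pQ h 0 = 0 :=
  le_antisymm (pQ_le h le_rfl 0 (fun w hw0 hwz => by rw [le_antisymm hwz hw0]; simp))
    (pQ_nonneg h le_rfl)

lemma pQ_add (h : E →L[ℝ] ℝ) {z₁ z₂ : E} (h1 : 0 ≤ z₁) (h2 : 0 ≤ z₂) :
    pQ h (z₁ + z₂) = pQ h z₁ + pQ h z₂ := by
  have hz : 0 ≤ z₁ + z₂ := add_nonneg h1 h2
  apply le_antisymm
  · apply pQ_le h hz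
    intro w hw0 hwz
    have hw1 : (0:E) ≤ w ⊓ z₁ := le_inf hw0 h1
    have hw1' : w ⊓ z₁ ≤ z₁ := inf_le_right
    have hw2 : (0:E) ≤ w - w ⊓ z₁ := sub_nonneg.mpr inf_le_left
    have hw2' : w - w ⊓ z₁ ≤ z₂ := by
      rw [sub_le_iff_le_add, add_inf]
      exact le_inf (le_add_of_nonneg_left h2) (by rwa [add_comm] at hwz)
    calc h w = h (w ⊓ z₁) + h (w - w ⊓ z₁) := by rw [← map_add]; congr 1; abel
      _ ≤ pQ h z₁ + pQ h z₂ := add_le_add (le_pQ h _ hw1 hw1') (le_pQ h _ hw2 hw2')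
  · have step : ∀ w₁ : E, 0 ≤ w₁ → w₁ ≤ z₁ → pQ h z₂ ≤ pQ h (z₁ + z₂) - h w₁ := by
      intro w₁ hw0 hwz
      apply pQ_le h h2
      intro w₂ hw0' hwz'
      have : h (w₁ + w₂) ≤ pQ h (z₁ + z₂) :=
        le_pQ h _ (add_nonneg hw0 hw0') (add_le_add hwz hwz')
      rw [map_add] at this
      linarith
    have : pQ h z₁ ≤ pQ h (z₁ + z₂) - pQ h z₂ := by
      apply pQ_le h h1
      intro w₁ hw0 hwz
      linarith [step w₁ hw0 hwz]
    linarith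

lemma pQ_smul (h : E →L[ℝ] ℝ) {z : E} (hz : 0 ≤ z) (c : ℝ) (hc : 0 ≤ c) :
    pQ h (c • z) = c * pQ h z := by
  rcases eq_or_lt_of_le hc with rfl | hc'
  · simp [pQ_zero]
  · apply le_antisymm
    · apply pQ_le h (real_smul_nonneg c hc z hz)
      intro w hw0 hwz
      have hfeas : c⁻¹ • w ≤ z := by
        have := smul_mono_vec c⁻¹ (by positivity) hwz
        rwa [smul_smul, inv_mul_cancel₀ hc'.ne', one_smul] at this
      have : h w = c * h (c⁻¹ • w) := by
        rw [map_smul, smul_eq_mul, ← mul_assoc, mul_inv_cancel₀ hc'.ne', one_mul]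
      rw [this]
      exact mul_le_mul_of_nonneg_left
        (le_pQ h _ (real_smul_nonneg c⁻¹ (by positivity) w hw0) hfeas) hc
    · rw [← le_div_iff₀' hc']
      apply pQ_le h hz
      intro w hw0 hwz
      rw [le_div_iff₀' hc']
      have : c * h w = h (c • w) := by rw [map_smul, smul_eq_mul]
      rw [this]
      exact le_pQ h _ (real_smul_nonneg c hc w hw0) (smul_mono_vec c hc hwz)

/-- The Riesz-Kantorovich positive part of a continuous functional. -/
noncomputable def posP (h : E →L[ℝ] ℝ) : E →L[ℝ] ℝ :=
  LinearMap.mkContinuous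
    { toFun := fun x => pQ h x⁺ - pQ h x⁻
      map_add' := by
        intro x y
        have key : (x + y)⁺ + (x⁻ + y⁻) = (x + y)⁻ + (x⁺ + y⁺) := by
          have e1 : (x+y)⁺ - (x+y)⁻ = x + y := posPart_sub_negPart _
          have e2 : x⁺ - x⁻ = x := posPart_sub_negPart _
          have e3 : y⁺ - y⁻ = y := posPart_sub_negPart _
          have : (x+y)⁺ - (x+y)⁻ = (x⁺ - x⁻) + (y⁺ - y⁻) := by rw [e1, e2, e3]
          linear_combination (norm := abel) this
        have k1 : pQ h ((x+y)⁺ + (x⁻ + y⁻)) = pQ h ((x+y)⁻ + (x⁺ + y⁺)) := by rw [key]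
        rw [pQ_add h (posPart_nonneg _) (add_nonneg (negPart_nonneg _) (negPart_nonneg _)),
          pQ_add h (negPart_nonneg _) (add_nonneg (posPart_nonneg _) (posPart_nonneg _)),
          pQ_add h (negPart_nonneg _) (negPart_nonneg _),
          pQ_add h (posPart_nonneg _) (posPart_nonneg _)] at k1
        linarith
      map_smul' := by
        intro c x
        simp only [RingHom.id_apply, smul_eq_mul]
        rcases le_or_gt 0 c with hc | hc
        · rw [smul_posPart' c hc, smul_negPart' c hc,
            pQ_smul h (posPart_nonneg _) c hc, pQ_smul h (negPart_nonneg _) c hc]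
          ring
        · have hc' : 0 ≤ -c := by linarith
          have e1 : (c • x)⁺ = (-c) • x⁻ := by
            rw [show c • x = (-c) • (-x) by rw [neg_smul, smul_neg, neg_neg],
              smul_posPart' (-c) hc', posPart_neg]
          have e2 : (c • x)⁻ = (-c) • x⁺ := by
            rw [show c • x = (-c) • (-x) by rw [neg_smul, smul_neg, neg_neg],
              smul_negPart' (-c) hc', negPart_neg]
          rw [e1, e2, pQ_smul h (negPart_nonneg _) (-c) hc',
            pQ_smul h (posPart_nonneg _) (-c) hc']
          ring }
    (2 * ‖h‖)
    (by
      intro x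
      simp only [LinearMap.coe_mk, AddHom.coe_mk]
      have b1 : 0 ≤ pQ h x⁺ := pQ_nonneg h (posPart_nonneg x)
      have b2 : 0 ≤ pQ h x⁻ := pQ_nonneg h (negPart_nonneg x)
      have c1 : pQ h x⁺ ≤ ‖h‖ * ‖x‖ := by
        refine le_trans (pQ_le h (posPart_nonneg x) (‖h‖ * ‖x⁺‖) ?_) ?_
        · intro w hw0 hwz
          calc h w ≤ |h w| := le_abs_self _
            _ ≤ ‖h‖ * ‖w‖ := h.le_opNorm w
            _ ≤ ‖h‖ * ‖x⁺‖ := mul_le_mul_of_nonneg_left (norm_le_of_between hw0 hwz)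
                (norm_nonneg h)
        · have : ‖x⁺‖ ≤ ‖x‖ := by
            rw [← norm_abs_eq_norm x]
            exact norm_le_of_between (posPart_nonneg x) (posPart_le_abs' x)
          exact mul_le_mul_of_nonneg_left this (norm_nonneg h)
      have c2 : pQ h x⁻ ≤ ‖h‖ * ‖x‖ := by
        refine le_trans (pQ_le h (negPart_nonneg x) (‖h‖ * ‖x⁻‖) ?_) ?_
        · intro w hw0 hwz
          calc h w ≤ |h w| := le_abs_self _
            _ ≤ ‖h‖ * ‖w‖ := h.le_opNorm w
            _ ≤ ‖h‖ * ‖x⁻‖ := mul_le_mul_of_nonneg_left (norm_le_of_between hw0 hwz)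
                (norm_nonneg h)
        · have : ‖x⁻‖ ≤ ‖x‖ := by
            rw [← norm_abs_eq_norm x]
            exact norm_le_of_between (negPart_nonneg x) (negPart_le_abs' x)
          exact mul_le_mul_of_nonneg_left this (norm_nonneg h)
      rw [Real.norm_eq_abs, abs_sub_le_iff]
      constructor <;> linarith)

lemma posP_apply_of_nonneg (h : E →L[ℝ] ℝ) {z : E} (hz : 0 ≤ z) : posP h z = pQ h z := by
  show pQ h z⁺ - pQ h z⁻ = pQ h z
  rw [posPart_eq_self.mpr hz, negPart_eq_zero.mpr hz, pQ_zero, sub_zero]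

lemma posP_pos (h : E →L[ℝ] ℝ) : ∀ z : E, 0 ≤ z → 0 ≤ posP h z := by
  intro z hz
  rw [posP_apply_of_nonneg h hz]
  exact pQ_nonneg h hz

lemma le_posP (h : E →L[ℝ] ℝ) {z : E} (hz : 0 ≤ z) : h z ≤ posP h z := by
  rw [posP_apply_of_nonneg h hz]
  exact le_pQ h z hz le_rfl

lemma posP_norm_le (h : E →L[ℝ] ℝ) (ε : ℝ) (hε : 0 ≤ ε)
    (hb : ∀ w : E, 0 ≤ w → h w ≤ ε * ‖w‖) : ‖posP h‖ ≤ 2 * ε := by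
  apply ContinuousLinearMap.opNorm_le_bound _ (by linarith)
  intro x
  have key : ∀ z : E, 0 ≤ z → pQ h z ≤ ε * ‖z‖ := by
    intro z hz
    apply pQ_le h hz
    intro w hw0 hwz
    calc h w ≤ ε * ‖w‖ := hb w hw0
      _ ≤ ε * ‖z‖ := mul_le_mul_of_nonneg_left (norm_le_of_between hw0 hwz) hε
  have b1 : 0 ≤ pQ h x⁺ := pQ_nonneg h (posPart_nonneg x)
  have b2 : 0 ≤ pQ h x⁻ := pQ_nonneg h (negPart_nonneg x)
  have n1 : ‖x⁺‖ ≤ ‖x‖ := by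
    rw [← norm_abs_eq_norm x]
    exact norm_le_of_between (posPart_nonneg x) (posPart_le_abs' x)
  have n2 : ‖x⁻‖ ≤ ‖x‖ := by
    rw [← norm_abs_eq_norm x]
    exact norm_le_of_between (negPart_nonneg x) (negPart_le_abs' x)
  have c1 := le_trans (key x⁺ (posPart_nonneg x)) (mul_le_mul_of_nonneg_left n1 hε)
  have c2 := le_trans (key x⁻ (negPart_nonneg x)) (mul_le_mul_of_nonneg_left n2 hε)
  show ‖pQ h x⁺ - pQ h x⁻‖ ≤ 2 * ε * ‖x‖
  rw [Real.norm_eq_abs, abs_sub_le_iff]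
  constructor <;> linarith

end RK

section Tools
variable {E : Type*} [NormedAddCommGroup E] [Lattice E] [IsOrderedAddMonoid E] [HasSolidNorm E] [NormedSpace ℝ E]

lemma exists_rec_seq {α : Type*} (C : List α → α → Prop) (hex : ∀ l : List α, ∃ x, C l x) :
    ∃ g : ℕ → α, ∀ n, C ((List.range n).map g) (g n) := by
  classical
  let F : List α → α := fun l => Classical.choose (hex l)
  let pre : ℕ → List α := fun n => Nat.rec [] (fun _ ih => ih ++ [F ih]) n
  have hpre : ∀ n, pre (n+1) = pre n ++ [F (pre n)] := fun n => rfl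
  refine ⟨fun n => F (pre n), ?_⟩
  have key : ∀ n, (List.range n).map (fun k => F (pre k)) = pre n := by
    intro n
    induction n with
    | zero => rfl
    | succ n ih => rw [List.range_succ, List.map_append, ih, hpre]; rfl
  intro n
  rw [key n]
  exact Classical.choose_spec (hex (pre n))

lemma list_range_map_sum {β : Type*} [AddCommMonoid β] (g : ℕ → β) (n : ℕ) :
    (((List.range n).map g).sum) = ∑ i ∈ Finset.range n, g i := by
  induction n with
  | zero => rfl
  | succ n ih => rw [List.range_succ, List.map_append, List.sum_append,
      Finset.sum_range_succ, ih]; simp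

lemma conic_of_unit (q : E →L[ℝ] ℝ) (s : ℝ) (hs : 0 ≤ s)
    (h : ∀ w : E, 0 ≤ w → ‖w‖ ≤ 1 → q w ≤ s) : ∀ w : E, 0 ≤ w → q w ≤ s * ‖w‖ := by
  intro w hw
  rcases eq_or_ne w 0 with rfl | hne
  · simp
  · have hn : (0:ℝ) < ‖w‖ := norm_pos_iff.mpr hne
    have h1 : q (‖w‖⁻¹ • w) ≤ s := by
      apply h _ (real_smul_nonneg _ (by positivity) _ hw)
      rw [norm_smul, Real.norm_eq_abs, abs_of_nonneg (by positivity), inv_mul_cancel₀ hn.ne']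
    rw [map_smul, smul_eq_mul] at h1
    calc q w = ‖w‖ * (‖w‖⁻¹ * q w) := by field_simp
      _ ≤ ‖w‖ * s := mul_le_mul_of_nonneg_left h1 hn.le
      _ = s * ‖w‖ := mul_comm _ _

lemma posfunc_norm_le (q : E →L[ℝ] ℝ) (hq : ∀ x : E, 0 ≤ x → 0 ≤ q x) (s : ℝ) (hs : 0 ≤ s)
    (h : ∀ w : E, 0 ≤ w → ‖w‖ ≤ 1 → q w ≤ s) : ‖q‖ ≤ s := by
  apply ContinuousLinearMap.opNorm_le_bound _ hs
  intro x
  calc ‖q x‖ = |q x| := rfl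
    _ ≤ q |x| := pos_apply_abs q hq x
    _ ≤ s * ‖(|x|)‖ := conic_of_unit q s hs h _ (abs_nonneg x)
    _ = s * ‖x‖ := by rw [norm_abs_eq_norm]

lemma exists_pos_near_norm (g : E →L[ℝ] ℝ) (hg : ∀ x : E, 0 ≤ x → 0 ≤ g x) (c : ℝ)
    (hc : 0 ≤ c) (h : c < ‖g‖) : ∃ b : E, 0 ≤ b ∧ ‖b‖ ≤ 1 ∧ c < g b := by
  by_contra hcon
  push_neg at hcon
  have : ‖g‖ ≤ c := posfunc_norm_le g hg c hc (fun w hw hw1 => hcon w hw hw1)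
  linarith

lemma peel (x : StrongDual ℝ (StrongDual ℝ E)) (hx : PosBidual x) (Cx : ℝ) (hCx : ‖x‖ ≤ Cx)
    (q f : StrongDual ℝ E) (hf : PosFunctional f) (ε : ℝ) (hε : 0 ≤ ε)
    (hb : ∀ w : E, 0 ≤ w → q w ≤ f w + ε * ‖w‖) : x q ≤ x f + Cx * (2 * ε) := by
  set r := posP (q - f) with hr_def
  have hr_norm : ‖r‖ ≤ 2 * ε := by
    apply posP_norm_le _ ε hε
    intro w hw
    have := hb w hw
    have hfw := hf w hw
    simp only [ContinuousLinearMap.sub_apply]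
    linarith
  have h2 : PosFunctional (f - (q - r)) := by
    intro w hw
    have := le_posP (q - f) hw
    simp only [ContinuousLinearMap.sub_apply] at this ⊢
    linarith
  have e1 : x q = x (q - r) + x r := by rw [← map_add]; congr 1; abel
  have e2 : x (q - r) ≤ x f := by
    have := hx _ h2
    rw [map_sub] at this
    linarith
  have e3 : x r ≤ Cx * (2 * ε) := by
    calc x r ≤ |x r| := le_abs_self _
      _ ≤ ‖x‖ * ‖r‖ := x.le_opNorm r
      _ ≤ Cx * (2 * ε) := by
          apply mul_le_mul hCx hr_norm (norm_nonneg r) (le_trans (norm_nonneg x) hCx)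
  linarith

end Tools

section Phi

lemma tendsto_list_sum0 {α : Type*} (f : α → ℕ → ℝ) (l : List α)
    (h : ∀ x ∈ l, Tendsto (f x) atTop (𝓝 0)) :
    Tendsto (fun m => (l.map (fun x => f x m)).sum) atTop (𝓝 0) := by
  induction l with
  | nil => simpa using tendsto_const_nhds
  | cons a t ih =>
    have ha := h a (List.mem_cons_self)
    have ht := ih (fun x hx => h x (List.mem_cons_of_mem a hx))
    have := ha.add ht
    rw [add_zero] at this
    simpa using this

lemma le_foldr_max (l : List ℕ) (i : ℕ) (hi : i ∈ l) : i ≤ l.foldr max 0 := by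
  induction l with
  | nil => cases hi
  | cons a t ih =>
    rcases List.mem_cons.mp hi with rfl | h
    · exact le_max_left _ _
    · exact le_trans (ih h) (le_max_right _ _)

lemma list_sum_apply' {X : Type*} [NormedAddCommGroup X] [NormedSpace ℝ X]
    (l : List (X →L[ℝ] ℝ)) (w : X) : (l.sum) w = (l.map (fun g => g w)).sum := by
  induction l with
  | nil => simp
  | cons a t ih => simp [ih]

variable {E₁ E₂ : Type*}
  [NormedAddCommGroup E₁] [Lattice E₁] [IsOrderedAddMonoid E₁] [HasSolidNorm E₁] [NormedSpace ℝ E₁] [CompleteSpace E₁]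
  [NormedAddCommGroup E₂] [Lattice E₂] [IsOrderedAddMonoid E₂] [HasSolidNorm E₂] [NormedSpace ℝ E₂] [CompleteSpace E₂]

/-- The key uniform domination lemma: for a positive almost Dunford-Pettis bilinear form
`K` there is, for each `δ > 0`, a positive functional `f` with `‖K w‖ ≤ f w + δ` on the
positive unit ball. -/
lemma phi_lemma
    (hE₁ : ∀ x : ℕ → E₁, (∀ n, 0 ≤ x n) → (∃ C, ∀ n, ‖x n‖ ≤ C) → DisjointSeq x →
      WeaklyNull x)
    (hE₂ : ∀ y : ℕ → E₂, (∀ n, 0 ≤ y n) → (∃ C, ∀ n, ‖y n‖ ≤ C) → DisjointSeq y →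
      WeaklyNull y)
    (K : E₁ →L[ℝ] E₂ →L[ℝ] ℝ)
    (hKpos : ∀ (z : E₁) (w : E₂), 0 ≤ z → 0 ≤ w → 0 ≤ K z w)
    (hKdp : ∀ (x : ℕ → E₁) (y : ℕ → E₂), DisjointSeq x → WeaklyNull x →
      DisjointSeq y → WeaklyNull y → Tendsto (fun n => K (x n) (y n)) atTop (𝓝 0))
    (δ : ℝ) (hδ : 0 < δ) :
    ∃ f : StrongDual ℝ E₁, PosFunctional f ∧
      ∀ w : E₁, 0 ≤ w → ‖w‖ ≤ 1 → ‖K w‖ ≤ f w + δ := by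
  by_contra hcon
  push_neg at hcon
  -- Construction 1 : sequences (w k), (b k) in the positive unit balls with
  -- `4^k * ∑_{i<k} K (w k) (b i) + δ ≤ K (w k) (b k)`.
  have hrec1 : ∃ g : ℕ → E₁ × E₂, ∀ n,
      (0 ≤ (g n).1 ∧ ‖(g n).1‖ ≤ 1 ∧ 0 ≤ (g n).2 ∧ ‖(g n).2‖ ≤ 1 ∧
        (4:ℝ)^n * ((((List.range n).map g).map (fun q => K (g n).1 q.2)).sum) + δ
          ≤ K (g n).1 (g n).2) := by
    obtain ⟨g, hg⟩ := exists_rec_seq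
      (C := fun (l : List (E₁ × E₂)) (p : E₁ × E₂) =>
        0 ≤ p.1 ∧ ‖p.1‖ ≤ 1 ∧ 0 ≤ p.2 ∧ ‖p.2‖ ≤ 1 ∧
          (4:ℝ)^l.length * ((l.map (fun q => K p.1 q.2)).sum) + δ ≤ K p.1 p.2)
      (fun l => by
        set f : StrongDual ℝ E₁ :=
          (4:ℝ)^l.length • (l.map (fun q => posP (K.flip q.2))).sum with hf_def
        have hfpos : PosFunctional f := by
          intro x hx
          rw [hf_def, ContinuousLinearMap.smul_apply, list_sum_apply', smul_eq_mul]
          apply mul_nonneg (by positivity)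
          apply List.sum_nonneg
          intro r hr
          rw [List.mem_map] at hr
          obtain ⟨s, hs1, rfl⟩ := hr
          rw [List.mem_map] at hs1
          obtain ⟨q, _, rfl⟩ := hs1
          exact posP_pos _ x hx
        obtain ⟨w, hw0, hw1, hwK⟩ := hcon f hfpos
        have hfw0 : 0 ≤ f w := hfpos w hw0
        obtain ⟨b, hb0, hb1, hbK⟩ :=
          exists_pos_near_norm (K w) (fun x hx => hKpos w x hw0 hx) (f w + δ)
            (by linarith) hwK
        refine ⟨(w, b), hw0, hw1, hb0, hb1, ?_⟩
        have hsum : (4:ℝ)^l.length * ((l.map (fun q => K w q.2)).sum) ≤ f w := by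
          rw [hf_def, ContinuousLinearMap.smul_apply, list_sum_apply', smul_eq_mul,
            List.map_map]
          apply mul_le_mul_of_nonneg_left _ (by positivity)
          apply List.sum_le_sum
          intro q hq
          exact le_posP (K.flip q.2) hw0
        simp only
        calc (4:ℝ)^l.length * ((l.map (fun q => K w q.2)).sum) + δ ≤ f w + δ := by linarith
          _ ≤ K w b := hbK.le)
    exact ⟨g, fun n => by
      have := hg n
      rwa [List.length_map, List.length_range] at this⟩
  obtain ⟨g, hg⟩ := hrec1
  set w : ℕ → E₁ := fun k => (g k).1 with hw_def
  set b : ℕ → E₂ := fun k => (g k).2 with hb_def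
  have hw0 : ∀ k, 0 ≤ w k := fun k => (hg k).1
  have hw1 : ∀ k, ‖w k‖ ≤ 1 := fun k => (hg k).2.1
  have hb0 : ∀ k, 0 ≤ b k := fun k => (hg k).2.2.1
  have hb1 : ∀ k, ‖b k‖ ≤ 1 := fun k => (hg k).2.2.2.1
  have hkey1 : ∀ k, (4:ℝ)^k * (∑ i ∈ Finset.range k, K (w k) (b i)) + δ ≤ K (w k) (b k) := by
    intro k
    have := (hg k).2.2.2.2
    rwa [List.map_map, show ((fun q : E₁ × E₂ => K (w k) q.2) ∘ g) = fun i => K (w k) (b i)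
      from rfl, list_range_map_sum] at this
  -- disjointify the (b k)
  obtain ⟨D, hD0, hDle, hDdisj, hDbound⟩ := disjointify b hb0 hb1
  have hDnorm : ∀ k, ‖D k‖ ≤ 1 := fun k =>
    le_trans (norm_le_of_between (hD0 k) (hDle k)) (hb1 k)
  have hKw_norm : ∀ k, ‖K (w k)‖ ≤ ‖K‖ := fun k => by
    calc ‖K (w k)‖ ≤ ‖K‖ * ‖w k‖ := K.le_opNorm (w k)
      _ ≤ ‖K‖ * 1 := mul_le_mul_of_nonneg_left (hw1 k) (norm_nonneg K)
      _ = ‖K‖ := mul_one _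
  have hstage1 : ∀ k, δ - (1/2:ℝ)^k * (2 * ‖K‖) ≤ K (w k) (D k) := by
    intro k
    have hb' := hDbound (K (w k)) (fun x hx => hKpos (w k) x (hw0 k) hx) k
    have h2 : (1/2:ℝ)^k * (2 * ‖K (w k)‖) ≤ (1/2:ℝ)^k * (2 * ‖K‖) := by
      apply mul_le_mul_of_nonneg_left (by linarith [hKw_norm k]) (by positivity)
    have h3 := hkey1 k
    linarith
  -- the functionals z ↦ K z (D m) converge to 0 pointwise
  have hWD : WeaklyNull D := hE₂ D hD0 ⟨1, hDnorm⟩ hDdisj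
  have hwnull : ∀ z : E₁, Tendsto (fun m => K z (D m)) atTop (𝓝 0) := fun z => hWD (K z)
  -- Construction 2 : a subsequence j with smallness of past w's against current D's.
  have hrec2 : ∃ j : ℕ → ℕ, ∀ n,
      (∀ i ∈ (List.range n).map j, i < j n) ∧
        ((((List.range n).map j).map (fun x => K (w x) (D (j n)))).sum
          ≤ δ/8 * (1/4:ℝ)^n) := by
    obtain ⟨j, hj⟩ := exists_rec_seq
      (C := fun (l : List ℕ) (m : ℕ) =>
        (∀ i ∈ l, i < m) ∧ ((l.map (fun x => K (w x) (D m))).sum ≤ δ/8 * (1/4:ℝ)^l.length))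
      (fun l => by
        have hsum : Tendsto (fun m => (l.map (fun x => K (w x) (D m))).sum) atTop (𝓝 0) :=
          tendsto_list_sum0 (fun x m => K (w x) (D m)) l (fun x _ => hwnull (w x))
        have hev1 : ∀ᶠ m in atTop, (l.map (fun x => K (w x) (D m))).sum
            ≤ δ/8 * (1/4:ℝ)^l.length := by
          have hpos : (0:ℝ) < δ/8 * (1/4:ℝ)^l.length := by positivity
          filter_upwards [hsum (Metric.ball_mem_nhds 0 hpos)] with m hm
          rw [Set.mem_preimage, Metric.mem_ball, Real.dist_eq, sub_zero] at hm
          exact le_of_lt (lt_of_le_of_lt (le_abs_self _) hm)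
        have hev2 : ∀ᶠ m in atTop, ∀ i ∈ l, i < m := by
          filter_upwards [eventually_gt_atTop (l.foldr max 0)] with m hm i hi
          exact lt_of_le_of_lt (le_foldr_max l i hi) hm
        obtain ⟨m, hm1, hm2⟩ := (hev2.and hev1).exists
        exact ⟨m, hm1, hm2⟩)
    refine ⟨j, fun n => ?_⟩
    have := hj n
    rwa [List.length_map, List.length_range] at this
  obtain ⟨j, hj⟩ := hrec2
  have hjmem : ∀ i n, i < n → j i < j n := fun i n h =>
    (hj n).1 (j i) (List.mem_map.mpr ⟨i, List.mem_range.mpr h, rfl⟩)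
  have hjmono : StrictMono j := fun a b h => hjmem a b h
  have hjsum : ∀ n, (∑ i ∈ Finset.range n, K (w (j i)) (D (j n))) ≤ δ/8 * (1/4:ℝ)^n := by
    intro n
    have := (hj n).2
    rwa [List.map_map, show ((fun x => K (w x) (D (j n))) ∘ j) =
      fun i => K (w (j i)) (D (j n)) from rfl, list_range_map_sum] at this
  obtain ⟨a, ha0, hale, hadisj, habound⟩ :=
    disjointify (fun k => w (j k)) (fun k => hw0 _) (fun k => hw1 _)
  have hanorm : ∀ k, ‖a k‖ ≤ 1 := fun k =>
    le_trans (norm_le_of_between (ha0 k) (hale k)) (hw1 _)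
  have hKflip_norm : ∀ k, ‖K.flip (D k)‖ ≤ ‖K.flip‖ := fun k => by
    calc ‖K.flip (D k)‖ ≤ ‖K.flip‖ * ‖D k‖ := K.flip.le_opNorm (D k)
      _ ≤ ‖K.flip‖ * 1 := mul_le_mul_of_nonneg_left (hDnorm k) (norm_nonneg K.flip)
      _ = ‖K.flip‖ := mul_one _
  have hstage2 : ∀ k, δ - δ/8 - (1/2:ℝ)^k * (2*‖K‖ + 2*‖K.flip‖) ≤ K (a k) (D (j k)) := by
    intro k
    have hb' := habound (K.flip (D (j k)))
      (fun x hx => hKpos x (D (j k)) hx (hD0 _)) k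
    simp only [ContinuousLinearMap.flip_apply] at hb'
    have t1 : δ - (1/2:ℝ)^k * (2 * ‖K‖) ≤ K (w (j k)) (D (j k)) := by
      have h1 := hstage1 (j k)
      have h2 : (1/2:ℝ)^(j k) ≤ (1/2:ℝ)^k :=
        pow_le_pow_of_le_one (by norm_num) (by norm_num) (hjmono.le_apply)
      have h3 : (1/2:ℝ)^(j k) * (2 * ‖K‖) ≤ (1/2:ℝ)^k * (2 * ‖K‖) := by
        apply mul_le_mul_of_nonneg_right h2 (by positivity)
      linarith
    have t2 : (4:ℝ)^k * (∑ i ∈ Finset.range k, K (w (j i)) (D (j k))) ≤ δ/8 := by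
      have := hjsum k
      have h4 : (4:ℝ)^k * (δ/8 * (1/4:ℝ)^k) = δ/8 := by
        rw [show (4:ℝ)^k * (δ/8 * (1/4:ℝ)^k) = δ/8 * ((4:ℝ) * (1/4))^k by
          rw [mul_pow]; ring]
        norm_num
      calc (4:ℝ)^k * (∑ i ∈ Finset.range k, K (w (j i)) (D (j k)))
          ≤ (4:ℝ)^k * (δ/8 * (1/4:ℝ)^k) := by
            apply mul_le_mul_of_nonneg_left this (by positivity)
        _ = δ/8 := h4
    have t3 : (1/2:ℝ)^k * (2 * ‖K.flip (D (j k))‖) ≤ (1/2:ℝ)^k * (2*‖K.flip‖) := by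
      apply mul_le_mul_of_nonneg_left (by linarith [hKflip_norm (j k)]) (by positivity)
    linarith
  have hWa : WeaklyNull a := hE₁ a ha0 ⟨1, hanorm⟩ hadisj
  have hDj_disj : DisjointSeq (fun k => D (j k)) := fun n k h =>
    hDdisj _ _ (fun hh => h (hjmono.injective hh))
  have hWDj : WeaklyNull (fun k => D (j k)) :=
    hE₂ _ (fun k => hD0 _) ⟨1, fun k => hDnorm _⟩ hDj_disj
  have htends := hKdp a (fun k => D (j k)) hadisj hWa hDj_disj hWDj
  have hq : Tendsto (fun k => (1/2:ℝ)^k * (2*‖K‖ + 2*‖K.flip‖)) atTop (𝓝 0) := by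
    have h0 : Tendsto (fun k : ℕ => (1/2:ℝ)^k) atTop (𝓝 0) := by
      apply tendsto_pow_atTop_nhds_zero_of_lt_one (by norm_num) (by norm_num)
    have := h0.mul_const (2*‖K‖ + 2*‖K.flip‖)
    rwa [zero_mul] at this
  have hev3 : ∀ᶠ k in atTop, (1/2:ℝ)^k * (2*‖K‖ + 2*‖K.flip‖) < δ/8 := by
    have hpos : (0:ℝ) < δ/8 := by linarith
    filter_upwards [hq (Metric.ball_mem_nhds 0 hpos)] with k hk
    rw [Set.mem_preimage, Metric.mem_ball, Real.dist_eq, sub_zero] at hk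
    exact lt_of_le_of_lt (le_abs_self _) hk
  have hev4 : ∀ᶠ k in atTop, |K (a k) (D (j k))| < δ/2 := by
    have hpos : (0:ℝ) < δ/2 := by linarith
    filter_upwards [htends (Metric.ball_mem_nhds 0 hpos)] with k hk
    rw [Set.mem_preimage, Metric.mem_ball, Real.dist_eq, sub_zero] at hk
    exact hk
  obtain ⟨k, hk3, hk4⟩ := (hev3.and hev4).exists
  have := hstage2 k
  have habs := le_abs_self (K (a k) (D (j k)))
  linarith

end Phi

section Core
variable {E₁ E₂ : Type*}
  [NormedAddCommGroup E₁] [Lattice E₁] [IsOrderedAddMonoid E₁] [HasSolidNorm E₁] [NormedSpace ℝ E₁] [CompleteSpace E₁]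
  [NormedAddCommGroup E₂] [Lattice E₂] [IsOrderedAddMonoid E₂] [HasSolidNorm E₂] [NormedSpace ℝ E₂] [CompleteSpace E₂]

lemma bound_of_wsn {E : Type*} [NormedAddCommGroup E] [NormedSpace ℝ E]
    (xbb : ℕ → StrongDual ℝ (StrongDual ℝ E)) (h : WeakStarNull xbb) : ∃ C, ∀ n, ‖xbb n‖ ≤ C := by
  apply banach_steinhaus
  intro f
  have h1 : Tendsto (fun n => ‖xbb n f‖) atTop (𝓝 0) := by
    have := (h f).norm
    rwa [norm_zero] at this
  obtain ⟨C, hC⟩ := h1.bddAbove_range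
  exact ⟨C, fun n => hC ⟨n, rfl⟩⟩

lemma core
    (hE₁ : ∀ x : ℕ → E₁, (∀ n, 0 ≤ x n) → (∃ C, ∀ n, ‖x n‖ ≤ C) → DisjointSeq x →
      WeaklyNull x)
    (hE₂ : ∀ y : ℕ → E₂, (∀ n, 0 ≤ y n) → (∃ C, ∀ n, ‖y n‖ ≤ C) → DisjointSeq y →
      WeaklyNull y)
    (K : E₁ →L[ℝ] E₂ →L[ℝ] ℝ)
    (hKpos : ∀ (z : E₁) (w : E₂), 0 ≤ z → 0 ≤ w → 0 ≤ K z w)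
    (hKdp : ∀ (x : ℕ → E₁) (y : ℕ → E₂), DisjointSeq x → WeaklyNull x →
      DisjointSeq y → WeaklyNull y → Tendsto (fun n => K (x n) (y n)) atTop (𝓝 0))
    (xbb : ℕ → StrongDual ℝ (StrongDual ℝ E₁)) (ybb : ℕ → StrongDual ℝ (StrongDual ℝ E₂))
    (hxpos : ∀ n, PosBidual (xbb n)) (hypos : ∀ n, PosBidual (ybb n))
    (hside : (WeakStarNull xbb ∧ ∃ C, ∀ n, ‖ybb n‖ ≤ C) ∨
      ((∃ C, ∀ n, ‖xbb n‖ ≤ C) ∧ WeakStarNull ybb)) :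
    Tendsto (fun n => xbb n ((ybb n).comp K)) atTop (𝓝 0) := by
  -- uniform bound on both sequences
  obtain ⟨C, hC1, hCx, hCy⟩ : ∃ C : ℝ, 1 ≤ C ∧ (∀ n, ‖xbb n‖ ≤ C) ∧ (∀ n, ‖ybb n‖ ≤ C) := by
    have hx : ∃ C, ∀ n, ‖xbb n‖ ≤ C := by
      rcases hside with ⟨h, _⟩ | ⟨h, _⟩
      exacts [bound_of_wsn xbb h, h]
    have hy : ∃ C, ∀ n, ‖ybb n‖ ≤ C := by
      rcases hside with ⟨_, h⟩ | ⟨_, h⟩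
      exacts [h, bound_of_wsn ybb h]
    obtain ⟨Cx, hCx⟩ := hx
    obtain ⟨Cy, hCy⟩ := hy
    refine ⟨max 1 (max Cx Cy), le_max_left _ _, fun n => ?_, fun n => ?_⟩
    · exact le_trans (hCx n) (le_trans (le_max_left _ _) (le_max_right _ _))
    · exact le_trans (hCy n) (le_trans (le_max_right _ _) (le_max_right _ _))
  have hC0 : (0:ℝ) < C := lt_of_lt_of_le one_pos hC1
  -- the functionals (ybb n) ∘ K are positive
  have hqpos : ∀ n, PosFunctional ((ybb n).comp K) := by
    intro n z hz
    exact hypos n (K z) (fun v hv => hKpos z v hz hv)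
  have hα0 : ∀ n, 0 ≤ xbb n ((ybb n).comp K) := fun n => hxpos n _ (hqpos n)
  rw [Metric.tendsto_atTop]
  intro ε hε
  rcases hside with ⟨hxw, _⟩ | ⟨_, hyw⟩
  · -- Case A : xbb weak*-null
    set δ' : ℝ := ε / (8 * C * C) with hδ'_def
    have hδ'0 : 0 < δ' := by positivity
    obtain ⟨f, hfpos, hf⟩ := phi_lemma hE₁ hE₂ K hKpos hKdp δ' hδ'0
    -- conic bound : (ybb n) (K w) ≤ (C • f) w + (C * δ') ‖w‖ for w ≥ 0
    have hconic : ∀ n, ∀ w : E₁, 0 ≤ w →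
        ((ybb n).comp K) w ≤ (C • f) w + (C * δ') * ‖w‖ := by
      intro n
      have hunit : ∀ w : E₁, 0 ≤ w → ‖w‖ ≤ 1 →
          ((ybb n).comp K - C • f) w ≤ C * δ' := by
        intro w hw0 hw1
        have h1 : (ybb n) (K w) ≤ C * ‖K w‖ := by
          calc (ybb n) (K w) ≤ |(ybb n) (K w)| := le_abs_self _
            _ ≤ ‖ybb n‖ * ‖K w‖ := (ybb n).le_opNorm (K w)
            _ ≤ C * ‖K w‖ := mul_le_mul_of_nonneg_right (hCy n) (norm_nonneg _)
        have h2 : ‖K w‖ ≤ f w + δ' := hf w hw0 hw1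
        simp only [ContinuousLinearMap.sub_apply, ContinuousLinearMap.coe_smul',
          Pi.smul_apply, ContinuousLinearMap.comp_apply, smul_eq_mul]
        nlinarith [hC0]
      intro w hw
      have := conic_of_unit _ (C * δ') (by positivity) hunit w hw
      simp only [ContinuousLinearMap.sub_apply, ContinuousLinearMap.coe_smul',
        Pi.smul_apply, smul_eq_mul] at this ⊢
      linarith
    have hpeel : ∀ n, xbb n ((ybb n).comp K) ≤ xbb n (C • f) + C * (2 * (C * δ')) := by
      intro n
      exact peel (xbb n) (hxpos n) C (hCx n) ((ybb n).comp K) (C • f)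
        (fun z hz => by
          simp only [ContinuousLinearMap.coe_smul', Pi.smul_apply, smul_eq_mul]
          exact mul_nonneg hC0.le (hfpos z hz))
        (C * δ') (by positivity) (hconic n)
    have hterm : C * (2 * (C * δ')) = ε / 4 := by
      rw [hδ'_def]; field_simp; ring
    have hxwf : Tendsto (fun n => xbb n (C • f)) atTop (𝓝 0) := hxw (C • f)
    have hev : ∀ᶠ n in atTop, xbb n (C • f) < ε / 2 := by
      filter_upwards [hxwf (Metric.ball_mem_nhds 0 (by linarith : (0:ℝ) < ε/2))] with n hn
      rw [Set.mem_preimage, Metric.mem_ball, Real.dist_eq, sub_zero] at hn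
      exact lt_of_le_of_lt (le_abs_self _) hn
    obtain ⟨N, hN⟩ := hev.exists_forall_of_atTop
    refine ⟨N, fun n hn => ?_⟩
    rw [Real.dist_eq, sub_zero, abs_of_nonneg (hα0 n)]
    have := hpeel n
    have := hN n hn
    linarith [hterm]
  · -- Case B : ybb weak*-null
    set δ' : ℝ := ε / (8 * C * C) with hδ'_def
    have hδ'0 : 0 < δ' := by positivity
    obtain ⟨f₂, hf₂pos, hf₂⟩ := phi_lemma hE₂ hE₁ K.flip
      (fun z v hz hv => hKpos v z hv hz)
      (fun x y hdx hwx hdy hwy => by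
        have := hKdp y x hdy hwy hdx hwx
        simpa using this)
      δ' hδ'0
    -- for each w in the positive unit ball of E₁ : ybb n (K w) ≤ ybb n f₂ + C * 2δ'
    have hub : ∀ n, ∀ w : E₁, 0 ≤ w → ‖w‖ ≤ 1 →
        ((ybb n).comp K) w ≤ ybb n f₂ + C * (2 * δ') := by
      intro n w hw0 hw1
      have hconic : ∀ b : E₂, 0 ≤ b → (K w) b ≤ f₂ b + δ' * ‖b‖ := by
        have hunit : ∀ b : E₂, 0 ≤ b → ‖b‖ ≤ 1 → (K w - f₂) b ≤ δ' := by
          intro b hb0 hb1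
          have h1 : (K w) b ≤ ‖K.flip b‖ := by
            calc (K w) b = (K.flip b) w := rfl
              _ ≤ |(K.flip b) w| := le_abs_self _
              _ ≤ ‖K.flip b‖ * ‖w‖ := (K.flip b).le_opNorm w
              _ ≤ ‖K.flip b‖ * 1 := mul_le_mul_of_nonneg_left hw1 (norm_nonneg _)
              _ = ‖K.flip b‖ := mul_one _
          have h2 := hf₂ b hb0 hb1
          simp only [ContinuousLinearMap.sub_apply]
          linarith
        intro b hb
        have := conic_of_unit _ δ' hδ'0.le hunit b hb
        simp only [ContinuousLinearMap.sub_apply] at this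
        linarith
      calc ((ybb n).comp K) w = ybb n (K w) := rfl
        _ ≤ ybb n f₂ + C * (2 * δ') :=
          peel (ybb n) (hypos n) C (hCy n) (K w) f₂ hf₂pos δ' hδ'0.le hconic
    have hnorm : ∀ n, ‖(ybb n).comp K‖ ≤ ybb n f₂ + C * (2 * δ') := by
      intro n
      apply posfunc_norm_le _ (hqpos n)
      · have := hypos n f₂ hf₂pos
        positivity
      · exact hub n
    have hαle : ∀ n, xbb n ((ybb n).comp K) ≤ C * (ybb n f₂) + C * (C * (2 * δ')) := by
      intro n
      calc xbb n ((ybb n).comp K) ≤ |xbb n ((ybb n).comp K)| := le_abs_self _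
        _ ≤ ‖xbb n‖ * ‖(ybb n).comp K‖ := (xbb n).le_opNorm _
        _ ≤ C * (ybb n f₂ + C * (2 * δ')) := by
            apply mul_le_mul (hCx n) (hnorm n) (norm_nonneg _) hC0.le
        _ = C * (ybb n f₂) + C * (C * (2 * δ')) := by ring
    have hterm : C * (C * (2 * δ')) = ε / 4 := by
      rw [hδ'_def]; field_simp; ring
    have hev : ∀ᶠ n in atTop, C * (ybb n f₂) < ε / 2 := by
      have h1 : Tendsto (fun n => C * (ybb n f₂)) atTop (𝓝 0) := by
        have := (hyw f₂).const_mul C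
        rwa [mul_zero] at this
      filter_upwards [h1 (Metric.ball_mem_nhds 0 (by linarith : (0:ℝ) < ε/2))] with n hn
      rw [Set.mem_preimage, Metric.mem_ball, Real.dist_eq, sub_zero] at hn
      exact lt_of_le_of_lt (le_abs_self _) hn
    obtain ⟨N, hN⟩ := hev.exists_forall_of_atTop
    refine ⟨N, fun n hn => ?_⟩
    rw [Real.dist_eq, sub_zero, abs_of_nonneg (hα0 n)]
    have := hαle n
    have := hN n hn
    linarith [hterm]

end Core

/-- If the norms of `E₁*` and `E₂*` are order continuous (in sequential form) and `F*` has
the dual positive Schur property, then both Aron-Berner extensions of a positive almost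
Dunford-Pettis continuous bilinear operator `A : E₁ × E₂ → F` are weakly positively
limited. -/
theorem aronBerner_weakly_positively_limited_vector {E₁ E₂ F : Type*}
    [NormedAddCommGroup E₁] [Lattice E₁] [IsOrderedAddMonoid E₁] [HasSolidNorm E₁] [NormedSpace ℝ E₁] [CompleteSpace E₁]
    [NormedAddCommGroup E₂] [Lattice E₂] [IsOrderedAddMonoid E₂] [HasSolidNorm E₂] [NormedSpace ℝ E₂] [CompleteSpace E₂]
    [NormedAddCommGroup F] [Lattice F] [IsOrderedAddMonoid F] [HasSolidNorm F] [NormedSpace ℝ F] [CompleteSpace F]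
    (hE₁ : ∀ x : ℕ → E₁, (∀ n, 0 ≤ x n) → (∃ C, ∀ n, ‖x n‖ ≤ C) → DisjointSeq x →
      WeaklyNull x)
    (hE₂ : ∀ y : ℕ → E₂, (∀ n, 0 ≤ y n) → (∃ C, ∀ n, ‖y n‖ ≤ C) → DisjointSeq y →
      WeaklyNull y)
    -- `F*` has the dual positive Schur property
    (hF : ∀ φ : ℕ → StrongDual ℝ (StrongDual ℝ F), (∀ n, PosBidual (φ n)) →
      (∀ f : StrongDual ℝ F, Tendsto (fun n => φ n f) atTop (𝓝 0)) →
      Tendsto (fun n => ‖φ n‖) atTop (𝓝 0))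
    (A : E₁ →L[ℝ] E₂ →L[ℝ] F)
    (hApos : ∀ (x : E₁) (y : E₂), 0 ≤ x → 0 ≤ y → 0 ≤ A x y)
    (hADP : ∀ (x : ℕ → E₁) (y : ℕ → E₂), DisjointSeq x → WeaklyNull x →
      DisjointSeq y → WeaklyNull y → Tendsto (fun n => ‖A (x n) (y n)‖) atTop (𝓝 0)) :
    ∀ (xbb : ℕ → StrongDual ℝ (StrongDual ℝ E₁)) (ybb : ℕ → StrongDual ℝ (StrongDual ℝ E₂)),
      (∀ n, PosBidual (xbb n)) → (∀ n, PosBidual (ybb n)) →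
      ((WeakStarNull xbb ∧ ∃ C, ∀ n, ‖ybb n‖ ≤ C) ∨
        ((∃ C, ∀ n, ‖xbb n‖ ≤ C) ∧ WeakStarNull ybb)) →
      Tendsto (fun n => ‖arensBil A (xbb n) (ybb n)‖) atTop (𝓝 0) ∧
        Tendsto (fun n => ‖arensBil A.flip (ybb n) (xbb n)‖) atTop (𝓝 0) := by
  intro xbb ybb hxpos hypos hside
  -- the two bilinear scalar kernels attached to a functional g on F
  set Kg : StrongDual ℝ F → (E₁ →L[ℝ] E₂ →L[ℝ] ℝ) :=
    fun g => (ContinuousLinearMap.compL ℝ E₂ F ℝ g).comp A with hKg_def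
  set Kg' : StrongDual ℝ F → (E₂ →L[ℝ] E₁ →L[ℝ] ℝ) :=
    fun g => (ContinuousLinearMap.compL ℝ E₁ F ℝ g).comp A.flip with hKg'_def
  have hKg_apply : ∀ g z w, Kg g z w = g (A z w) := fun g z w => rfl
  have hKg'_apply : ∀ g w z, Kg' g w z = g (A z w) := fun g w z => rfl
  have hKgpos : ∀ g : StrongDual ℝ F, PosFunctional g →
      ∀ (z : E₁) (w : E₂), 0 ≤ z → 0 ≤ w → 0 ≤ Kg g z w := by
    intro g hg z w hz hw
    rw [hKg_apply]
    exact hg _ (hApos z w hz hw)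
  have hKg'pos : ∀ g : StrongDual ℝ F, PosFunctional g →
      ∀ (w : E₂) (z : E₁), 0 ≤ w → 0 ≤ z → 0 ≤ Kg' g w z := by
    intro g hg w z hw hz
    rw [hKg'_apply]
    exact hg _ (hApos z w hz hw)
  have hKgdp : ∀ g : StrongDual ℝ F, ∀ (x : ℕ → E₁) (y : ℕ → E₂), DisjointSeq x → WeaklyNull x →
      DisjointSeq y → WeaklyNull y → Tendsto (fun n => Kg g (x n) (y n)) atTop (𝓝 0) := by
    intro g x y hdx hwx hdy hwy
    refine squeeze_zero_norm (a := fun n => ‖g‖ * ‖A (x n) (y n)‖) (fun n => ?_) ?_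
    · rw [hKg_apply]
      exact g.le_opNorm _
    · have := (hADP x y hdx hwx hdy hwy).const_mul ‖g‖
      rwa [mul_zero] at this
  have hKg'dp : ∀ g : StrongDual ℝ F, ∀ (y : ℕ → E₂) (x : ℕ → E₁), DisjointSeq y → WeaklyNull y →
      DisjointSeq x → WeaklyNull x → Tendsto (fun n => Kg' g (y n) (x n)) atTop (𝓝 0) := by
    intro g y x hdy hwy hdx hwx
    refine squeeze_zero_norm (a := fun n => ‖g‖ * ‖A (x n) (y n)‖) (fun n => ?_) ?_
    · rw [hKg'_apply]
      exact g.le_opNorm _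
    · have := (hADP x y hdx hwx hdy hwy).const_mul ‖g‖
      rwa [mul_zero] at this
  have hside' : (WeakStarNull ybb ∧ ∃ C, ∀ n, ‖xbb n‖ ≤ C) ∨
      ((∃ C, ∀ n, ‖ybb n‖ ≤ C) ∧ WeakStarNull xbb) := by
    rcases hside with ⟨h1, h2⟩ | ⟨h1, h2⟩
    · exact Or.inr ⟨h2, h1⟩
    · exact Or.inl ⟨h2, h1⟩
  constructor
  · -- first Aron-Berner extension
    apply hF
    · -- positivity
      intro n g hg
      rw [arensBil_apply]
      apply hxpos n
      intro z hz
      exact hypos n _ (fun w hw => hKgpos g hg z w hz hw)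
    · -- weak*-null
      intro g
      have hgdec : g = posP g - (posP g - g) := by abel
      have htp : Tendsto (fun n => arensBil A (xbb n) (ybb n) (posP g)) atTop (𝓝 0) := by
        simp only [arensBil_apply]
        exact core hE₁ hE₂ (Kg (posP g)) (hKgpos _ (posP_pos g)) (hKgdp _)
          xbb ybb hxpos hypos hside
      have htm : Tendsto (fun n => arensBil A (xbb n) (ybb n) (posP g - g)) atTop (𝓝 0) := by
        simp only [arensBil_apply]
        exact core hE₁ hE₂ (Kg (posP g - g))
          (hKgpos _ (fun z hz => by
            have := le_posP g hz
            simp only [ContinuousLinearMap.sub_apply]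
            linarith))
          (hKgdp _) xbb ybb hxpos hypos hside
      have := htp.sub htm
      rw [sub_zero] at this
      convert this using 2 with n
      rw [show (arensBil A (xbb n) (ybb n)) g
          = (arensBil A (xbb n) (ybb n)) (posP g - (posP g - g)) by rw [← hgdec]]
      rw [map_sub]
  · -- second Aron-Berner extension
    apply hF
    · intro n g hg
      rw [arensBil_apply]
      apply hypos n
      intro w hw
      exact hxpos n _ (fun z hz => hKg'pos g hg w z hw hz)
    · intro g
      have hgdec : g = posP g - (posP g - g) := by abel
      have htp : Tendsto (fun n => arensBil A.flip (ybb n) (xbb n) (posP g)) atTop (𝓝 0) := by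
        simp only [arensBil_apply]
        exact core hE₂ hE₁ (Kg' (posP g)) (hKg'pos _ (posP_pos g)) (hKg'dp _)
          ybb xbb hypos hxpos hside'
      have htm : Tendsto (fun n => arensBil A.flip (ybb n) (xbb n) (posP g - g))
          atTop (𝓝 0) := by
        simp only [arensBil_apply]
        exact core hE₂ hE₁ (Kg' (posP g - g))
          (hKg'pos _ (fun z hz => by
            have := le_posP g hz
            simp only [ContinuousLinearMap.sub_apply]
            linarith))
          (hKg'dp _) ybb xbb hypos hxpos hside'
      have := htp.sub htm
      rw [sub_zero] at this
      convert this using 2 with n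
      rw [show (arensBil A.flip (ybb n) (xbb n)) g
          = (arensBil A.flip (ybb n) (xbb n)) (posP g - (posP g - g)) by rw [← hgdec]]
      rw [map_sub]

end
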